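/- Let g be a finite-dimensional central simple Lie algebra over a field F of characteristic 0, and let Ann(g) ⊆ U(g) be the two-sided ideal of elements of the universal enveloping algebra acting as zero on the adjoint module g. If V is a finite-dimensional irreducible g-module with Ann(g)·V = 0, then V is isomorphic to the adjoint module g. -/

import Mathlib

open LinearMap in
/-- Core module-theoretic lemma: if `M`, `N` are simple `R`-modules, `M` has a finite
"detecting family" `x` (any `r` killing all `x i` kills `M`), and every `r` killing `M`
kills `N`, then `N ≃ M`. -/
theorem aux_simple_iso {R M N : Type*} [Ring R] [AddCommGroup M] [Module R M]
    [AddCommGroup N] [Module R N] [IsSimpleModule R M] [IsSimpleModule R N]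
    {n : ℕ} (x : Fin n → M)
    (hx : ∀ r : R, (∀ i, r • x i = 0) → ∀ m : M, r • m = 0)
    (hann : ∀ r : R, (∀ m : M, r • m = 0) → ∀ v : N, r • v = 0) :
    Nonempty (N ≃ₗ[R] M) := by
  classical
  haveI : IsSemisimpleModule R M := inferInstance
  haveI : IsSemisimpleModule R (Fin n → M) :=
    isSemisimpleModule_of_isSemisimpleModule_submodule'
      (p := fun i => range (LinearMap.single R (fun _ : Fin n => M) i))
      (fun i => IsSemisimpleModule.range _)
      (by simp_rw [range_eq_map, Submodule.iSup_map_single, Submodule.pi_top])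
  -- the map `R → M^n`, `r ↦ (r • x i)_i`
  let φ : R →ₗ[R] (Fin n → M) := LinearMap.pi fun i => toSpanSingleton R M (x i)
  haveI : Nontrivial N := IsSimpleModule.nontrivial R N
  obtain ⟨v, hv⟩ := exists_ne (0 : N)
  let ψ : R →ₗ[R] N := toSpanSingleton R N v
  have hψ : Function.Surjective ψ := by
    have : LinearMap.range ψ ≠ ⊥ := by
      intro h
      apply hv
      have : ψ 1 ∈ LinearMap.range ψ := ⟨1, rfl⟩
      rw [h] at this
      simpa [ψ, toSpanSingleton_apply] using this
    rw [← range_eq_top]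
    exact (eq_bot_or_eq_top (LinearMap.range ψ)).resolve_left this
  have hle : ker φ ≤ ker ψ := by
    intro r hr
    have h1 : ∀ i, r • x i = 0 := by
      intro i
      have := congrFun (mem_ker.mp hr) i
      simpa [φ, toSpanSingleton_apply] using this
    simp only [mem_ker, ψ, toSpanSingleton_apply]
    exact hann r (hx r h1) v
  -- `N` is a quotient of `R ⧸ ker φ ≃ range φ ≤ M^n`, which is semisimple
  let θ₀ : (R ⧸ ker φ) →ₗ[R] N := Submodule.liftQ (ker φ) ψ hle
  have hθ₀ : Function.Surjective θ₀ := by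
    intro y
    obtain ⟨r, rfl⟩ := hψ y
    exact ⟨Submodule.Quotient.mk r, rfl⟩
  let e1 : (R ⧸ ker φ) ≃ₗ[R] LinearMap.range φ := φ.quotKerEquivRange
  let θ : LinearMap.range φ →ₗ[R] N := θ₀ ∘ₗ e1.symm.toLinearMap
  have hθ : Function.Surjective θ := hθ₀.comp e1.symm.surjective
  obtain ⟨W, hW⟩ := exists_isCompl (ker θ)
  let e2 : (LinearMap.range φ ⧸ ker θ) ≃ₗ[R] N := θ.quotKerEquivOfSurjective hθ
  let e3 : (LinearMap.range φ ⧸ ker θ) ≃ₗ[R] W := Submodule.quotientEquivOfIsCompl _ _ hW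
  let g : N →ₗ[R] (Fin n → M) :=
    (LinearMap.range φ).subtype ∘ₗ W.subtype ∘ₗ e3.toLinearMap ∘ₗ e2.symm.toLinearMap
  have hg : Function.Injective g := by
    refine (Submodule.injective_subtype _).comp ?_
    exact (Submodule.injective_subtype _).comp (e3.injective.comp e2.symm.injective)
  have hgv : g v ≠ 0 := fun h => hv (hg (by simpa using h))
  obtain ⟨i, hi⟩ : ∃ i, g v i ≠ 0 := by
    by_contra h
    push_neg at h
    exact hgv (funext h)
  let h : N →ₗ[R] M := (LinearMap.proj i) ∘ₗ g
  have hne : h ≠ 0 := fun h0 => hi (by simpa [h] using congrFun (congrArg (·.toFun) h0) v)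
  exact ⟨LinearEquiv.ofBijective h (h.bijective_of_ne_zero hne)⟩

/-- Let `g` be a finite-dimensional central simple Lie algebra over a field
`F` of characteristic `0`, and let `Ann(g) ⊆ U(g)` be the ideal of elements of the universal
enveloping algebra acting as zero on the adjoint module `g`.  If `V` is a finite-dimensional
irreducible `g`-module with `Ann(g)·V = 0`, then `V` is isomorphic to the adjoint module `g`. -/
theorem irreducible_module_killed_by_ann_iso_adjoint
    (F L V : Type*) [Field F] [CharZero F]
    [LieRing L] [LieAlgebra F L] [FiniteDimensional F L] [LieAlgebra.IsSimple F L]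
    -- `L` is central: its centroid consists of the scalar multiples of the identity
    (hcentral : ∀ f : Module.End F L,
      (∀ a b : L, f ⁅a, b⁆ = ⁅a, f b⁆ ∧ f ⁅a, b⁆ = ⁅f a, b⁆) →
      ∃ c : F, f = c • (LinearMap.id : L →ₗ[F] L))
    [AddCommGroup V] [Module F V] [LieRingModule L V] [LieModule F L V]
    [FiniteDimensional F V] [LieModule.IsIrreducible F L V]
    -- `Ann(g) · V = 0`: every element of `U(g)` acting as zero on the adjoint module
    -- also acts as zero on `V`
    (hann : ∀ x : UniversalEnvelopingAlgebra F L,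
      UniversalEnvelopingAlgebra.lift F (LieModule.toEnd F L L) x = 0 →
      UniversalEnvelopingAlgebra.lift F (LieModule.toEnd F L V) x = 0) :
    Nonempty (V ≃ₗ⁅F,L⁆ L) := by
  classical
  set U := UniversalEnvelopingAlgebra F L with hU
  let ρV : U →ₐ[F] Module.End F V := UniversalEnvelopingAlgebra.lift F (LieModule.toEnd F L V)
  let ρL : U →ₐ[F] Module.End F L := UniversalEnvelopingAlgebra.lift F (LieModule.toEnd F L L)
  letI mV : Module U V := Module.compHom V ρV.toRingHom
  letI mL : Module U L := Module.compHom L ρL.toRingHom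
  have sV : ∀ (u : U) (v : V), u • v = ρV u v := fun _ _ => rfl
  have sL : ∀ (u : U) (m : L), u • m = ρL u m := fun _ _ => rfl
  have algV : ∀ (c : F) (v : V), (algebraMap F U c) • v = c • v := by
    intro c v
    rw [sV, AlgHom.commutes]
    exact Module.algebraMap_end_apply (R := F) (S := F) (M := V) c v
  have algL : ∀ (c : F) (m : L), (algebraMap F U c) • m = c • m := by
    intro c m
    rw [sL, AlgHom.commutes]
    exact Module.algebraMap_end_apply (R := F) (S := F) (M := L) c m
  have ιV : ∀ (a : L) (v : V), (UniversalEnvelopingAlgebra.ι F a) • v = ⁅a, v⁆ := by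
    intro a v
    rw [sV]
    erw [UniversalEnvelopingAlgebra.lift_ι_apply]
    rfl
  have ιL : ∀ (a m : L), (UniversalEnvelopingAlgebra.ι F a) • m = ⁅a, m⁆ := by
    intro a m
    rw [sL]
    erw [UniversalEnvelopingAlgebra.lift_ι_apply]
    rfl
  haveI : Nontrivial V := LieModule.nontrivial_of_isIrreducible F L V
  haveI : Nontrivial L := LieModule.nontrivial_of_isIrreducible F L L
  -- simplicity of `V` as a `U`-module
  haveI simpV : IsSimpleModule U V := by
    refine @IsSimpleModule.mk _ _ _ _ _ (@IsSimpleOrder.mk _ _ _ inferInstance fun p => ?_)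
    let q : LieSubmodule F L V :=
      { carrier := p
        add_mem' := fun ha hb => p.add_mem ha hb
        zero_mem' := p.zero_mem
        smul_mem' := fun c v hv => by
          have := p.smul_mem (algebraMap F U c) hv
          rwa [algV] at this
        lie_mem := fun {a v} hv => by
          have := p.smul_mem (UniversalEnvelopingAlgebra.ι F a) hv
          rwa [ιV] at this }
    have hq : ∀ v : V, v ∈ q ↔ v ∈ p := fun _ => Iff.rfl
    rcases eq_bot_or_eq_top q with h | h
    · left; ext v
      rw [← hq, h]
      simp [LieSubmodule.mem_bot]
    · right; ext v
      rw [← hq, h]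
      simp [LieSubmodule.mem_top]
  haveI simpL : IsSimpleModule U L := by
    refine @IsSimpleModule.mk _ _ _ _ _ (@IsSimpleOrder.mk _ _ _ inferInstance fun p => ?_)
    let q : LieSubmodule F L L :=
      { carrier := p
        add_mem' := fun ha hb => p.add_mem ha hb
        zero_mem' := p.zero_mem
        smul_mem' := fun c m hm => by
          have := p.smul_mem (algebraMap F U c) hm
          rwa [algL] at this
        lie_mem := fun {a m} hm => by
          have := p.smul_mem (UniversalEnvelopingAlgebra.ι F a) hm
          rwa [ιL] at this }
    have hq : ∀ m : L, m ∈ q ↔ m ∈ p := fun _ => Iff.rfl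
    rcases eq_bot_or_eq_top q with h | h
    · left; ext m
      rw [← hq, h]
      simp [LieSubmodule.mem_bot]
    · right; ext m
      rw [← hq, h]
      simp [LieSubmodule.mem_top]
  -- the detecting family: a basis of `L`
  let b := Module.finBasis F L
  have hx : ∀ r : U, (∀ i, r • b i = 0) → ∀ m : L, r • m = 0 := by
    intro r hr m
    have : ρL r = 0 := b.ext fun i => by rw [← sL, hr i]; rfl
    rw [sL, this]; rfl
  have hann' : ∀ r : U, (∀ m : L, r • m = 0) → ∀ v : V, r • v = 0 := by
    intro r hr v
    have h0 : ρL r = 0 := by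
      ext m
      rw [← sL, hr m]; rfl
    have := hann r h0
    rw [sV, this]; rfl
  obtain ⟨e⟩ := aux_simple_iso (R := U) (N := V) (fun i => b i) hx hann'
  -- upgrade the `U`-linear equivalence to a Lie module equivalence
  have emap_smul : ∀ (c : F) (v : V), e (c • v) = c • e v := by
    intro c v
    rw [← algV c v, map_smul, algL]
  have emap_lie : ∀ (a : L) (v : V), e ⁅a, v⁆ = ⁅a, e v⁆ := by
    intro a v
    rw [← ιV a v, map_smul, ιL]
  exact ⟨{ toFun := e
           map_add' := map_add e
           map_smul' := emap_smul
           map_lie' := fun {a v} => emap_lie a v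
           invFun := e.symm
           left_inv := e.left_inv
           right_inv := e.right_inv }⟩
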